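/- For a nonincreasing, continuous-from-above set function C : [0,1] → 2^Θ, defining t(θ) = sup{1/α : α ∈ [0,1), θ ∉ C(α)} (with sup ∅ = 1), the following equivalence holds for all θ ∈ Θ and α ∈ [0,1): t(θ) < 1/α if and only if θ ∈ C(α). -/
import Mathlib

open MeasureTheory ENNReal
open scoped ENNReal

/-- For a nonincreasing, continuous-from-above set function `C : [0,1] → 2^Θ`, defining
`t(θ) = sup ({1/α : α ∈ [0,1), θ ∉ C α} ∪ {1})` (so that `sup ∅ = 1`), one has the
equivalence `t(θ) < 1/α ↔ θ ∈ C α` for all `θ` and `α ∈ [0,1)`. -/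
theorem t_lt_inv_iff_mem {Θ : Type*} (C : ℝ → Set Θ)
    (hC_anti : ∀ a b : ℝ, 0 ≤ a → a ≤ b → b < 1 → C b ⊆ C a)
    (hC_cont : ∀ a : ℝ, 0 ≤ a → a < 1 → C a = ⋃ b ∈ Set.Ioo a 1, C b)
    (t : Θ → ℝ≥0∞)
    (ht : ∀ θ, t θ =
      sSup (insert 1 {x | ∃ a : ℝ, 0 ≤ a ∧ a < 1 ∧ θ ∉ C a ∧ x = (ENNReal.ofReal a)⁻¹})) :
    ∀ (θ : Θ) (a : ℝ), 0 ≤ a → a < 1 →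
      (t θ < (ENNReal.ofReal a)⁻¹ ↔ θ ∈ C a) := by
  intro θ a ha ha1
  constructor
  · intro hlt
    by_contra hmem
    have hle : (ENNReal.ofReal a)⁻¹ ≤ t θ := by
      rw [ht]
      exact le_sSup (Set.mem_insert_iff.2 (Or.inr ⟨a, ha, ha1, hmem, rfl⟩))
    exact absurd hlt (not_lt.2 hle)
  · intro hmem
    rw [hC_cont a ha ha1] at hmem
    simp only [Set.mem_iUnion] at hmem
    obtain ⟨b, ⟨hab, hb1⟩, hθb⟩ := hmem
    have hb0 : 0 < b := lt_of_le_of_lt ha hab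
    have hsup : t θ ≤ (ENNReal.ofReal b)⁻¹ := by
      rw [ht]
      apply sSup_le
      intro x hx
      rcases Set.mem_insert_iff.1 hx with rfl | ⟨a', ha'0, ha'1, hna', rfl⟩
      · rw [ENNReal.one_le_inv]
        exact ENNReal.ofReal_le_one.2 hb1.le
      · have hba' : b ≤ a' := by
          by_contra h
          push_neg at h
          exact hna' (hC_anti a' b ha'0 h.le hb1 hθb)
        exact ENNReal.inv_le_inv.2 (ENNReal.ofReal_le_ofReal hba')
    refine lt_of_le_of_lt hsup ?_
    rw [ENNReal.inv_lt_inv]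
    exact (ENNReal.ofReal_lt_ofReal_iff hb0).2 hab
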